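/- Every 2-level Construction C constellation Γ_C = ψ(C_1) + 2ψ(C_2) + 4Z^n built from linear binary codes C_1, C_2 ⊆ F_2^n is geometrically uniform. -/

import Mathlib

/-- The natural embedding of `F_2^n` into `ℝ^n` (Euclidean space). -/
noncomputable def psiR {n : ℕ} (c : Fin n → ZMod 2) : EuclideanSpace ℝ (Fin n) :=
  WithLp.toLp 2 (fun i => ((c i).val : ℝ))

/-- The natural embedding of `ℤ^n` into `ℝ^n` (Euclidean space). -/
noncomputable def embZ {n : ℕ} (z : Fin n → ℤ) : EuclideanSpace ℝ (Fin n) :=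
  WithLp.toLp 2 (fun i => (z i : ℝ))

/-- The 2-level Construction C constellation `ψ(C₁) + 2ψ(C₂) + 4ℤ^n`. -/
noncomputable def gammaC2 {n : ℕ} (C₁ C₂ : Submodule (ZMod 2) (Fin n → ZMod 2)) :
    Set (EuclideanSpace ℝ (Fin n)) :=
  {v | ∃ c₁ ∈ C₁, ∃ c₂ ∈ C₂, ∃ z : Fin n → ℤ,
        v = psiR c₁ + (2 : ℝ) • psiR c₂ + (4 : ℝ) • embZ z}

/-- Divisibility fact checked by finite case analysis over `ZMod 2`. -/
lemma constrC_M_dvd : ∀ α β γ α₂ β₂ γ₂ : ZMod 2,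
    (4:ℤ) ∣ ((1-2*((α+β).val:ℤ))*((γ.val:ℤ)+2*(γ₂.val:ℤ)-(α.val:ℤ)-2*(α₂.val:ℤ))
      + (β.val:ℤ) + 2*(β₂.val:ℤ) - ((γ+α+β).val:ℤ) - 2*((γ₂+α₂+β₂).val:ℤ)) := by decide

/-- Coordinate-level key identity for the sign-flip-and-translate isometry. -/
lemma constrC_keyInt (α β γ α₂ β₂ γ₂ : ZMod 2) (zx zy z : ℤ) :
    ∃ z' : ℤ, (1-2*((α+β).val:ℤ))*((γ.val:ℤ)+2*(γ₂.val:ℤ)+4*z) + ((β.val:ℤ)+2*(β₂.val:ℤ)+4*zy)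
      - (1-2*((α+β).val:ℤ))*((α.val:ℤ)+2*(α₂.val:ℤ)+4*zx)
      = ((γ+α+β).val:ℤ) + 2*((γ₂+α₂+β₂).val:ℤ) + 4*z' := by
  obtain ⟨k, hk⟩ := constrC_M_dvd α β γ α₂ β₂ γ₂
  exact ⟨(1-2*((α+β).val:ℤ))*(z-zx)+zy+k, by linear_combination hk⟩

/-- A coordinatewise sign flip followed by a translation, as an isometry of `ℝ^n`. -/
noncomputable def signAffine {n : ℕ} (ε : Fin n → ℝ) (hε : ∀ i, ε i * ε i = 1)
    (t : EuclideanSpace ℝ (Fin n)) :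
    EuclideanSpace ℝ (Fin n) ≃ᵢ EuclideanSpace ℝ (Fin n) where
  toFun v := WithLp.toLp 2 (fun i => ε i * v i + t i)
  invFun w := WithLp.toLp 2 (fun i => ε i * (w i - t i))
  left_inv v := by ext i; simp only [PiLp.toLp_apply]; rw [add_sub_cancel_right, ← mul_assoc, hε, one_mul]
  right_inv w := by ext i; simp only [PiLp.toLp_apply]; rw [← mul_assoc, hε, one_mul, sub_add_cancel]
  isometry_toFun := by
    apply Isometry.of_dist_eq
    intro u v
    rw [EuclideanSpace.dist_eq, EuclideanSpace.dist_eq]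
    simp only [PiLp.toLp_apply]
    congr 1
    apply Finset.sum_congr rfl
    intro i _
    have h : (ε i * u i + t i) - (ε i * v i + t i) = ε i * (u i - v i) := by ring
    rw [Real.dist_eq, Real.dist_eq, h, abs_mul]
    have hε1 : |ε i| = 1 := by
      rcases (mul_self_eq_one_iff.mp (hε i)) with h1 | h1 <;> simp [h1]
    rw [hε1, one_mul]

/-- The sign-flip-and-translate map associated to codewords `a`, `b` sends the
constellation into itself. -/
lemma constrC_image_mem {n : ℕ} (C₁ C₂ : Submodule (ZMod 2) (Fin n → ZMod 2))
    {a₁ b₁ a₂ b₂ : Fin n → ZMod 2} (ha₁ : a₁ ∈ C₁) (hb₁ : b₁ ∈ C₁)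
    (ha₂ : a₂ ∈ C₂) (hb₂ : b₂ ∈ C₂) (zx zy : Fin n → ℤ)
    {v : EuclideanSpace ℝ (Fin n)} (hv : v ∈ gammaC2 C₁ C₂) :
    (WithLp.toLp 2 (fun i => ((1 - 2*((a₁ i + b₁ i).val:ℤ) : ℤ):ℝ) * v i
      + ((psiR b₁ + (2:ℝ)•psiR b₂ + (4:ℝ)•embZ zy) i
        - ((1 - 2*((a₁ i + b₁ i).val:ℤ) : ℤ):ℝ) * (psiR a₁ + (2:ℝ)•psiR a₂ + (4:ℝ)•embZ zx) i))
      : EuclideanSpace ℝ (Fin n)) ∈ gammaC2 C₁ C₂ := by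
  obtain ⟨c₁, hc₁, c₂, hc₂, z, rfl⟩ := hv
  refine ⟨c₁ + a₁ + b₁, add_mem (add_mem hc₁ ha₁) hb₁,
          c₂ + a₂ + b₂, add_mem (add_mem hc₂ ha₂) hb₂,
          fun i => Classical.choose
            (constrC_keyInt (a₁ i) (b₁ i) (c₁ i) (a₂ i) (b₂ i) (c₂ i) (zx i) (zy i) (z i)), ?_⟩
  ext i
  have hs := Classical.choose_spec
    (constrC_keyInt (a₁ i) (b₁ i) (c₁ i) (a₂ i) (b₂ i) (c₂ i) (zx i) (zy i) (z i))
  have hs' := congrArg (Int.cast : ℤ → ℝ) hs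
  push_cast at hs'
  simp only [psiR, embZ, PiLp.add_apply, PiLp.smul_apply, smul_eq_mul, Pi.add_apply, PiLp.toLp_apply]
  push_cast
  linear_combination hs'

/-- Every 2-level Construction C constellation `Γ_C = ψ(C₁) + 2ψ(C₂) + 4ℤ^n` built from
linear binary codes is geometrically uniform. -/
theorem constructionC_two_level_geometricallyUniform {n : ℕ}
    (C₁ C₂ : Submodule (ZMod 2) (Fin n → ZMod 2)) :
    ∀ x ∈ gammaC2 C₁ C₂, ∀ y ∈ gammaC2 C₁ C₂,
      ∃ T : EuclideanSpace ℝ (Fin n) ≃ᵢ EuclideanSpace ℝ (Fin n),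
        T x = y ∧ T '' gammaC2 C₁ C₂ = gammaC2 C₁ C₂ := by
  intro x hx y hy
  obtain ⟨a₁, ha₁, a₂, ha₂, zx, rfl⟩ := hx
  obtain ⟨b₁, hb₁, b₂, hb₂, zy, rfl⟩ := hy
  set X : EuclideanSpace ℝ (Fin n) := psiR a₁ + (2:ℝ)•psiR a₂ + (4:ℝ)•embZ zx with hX
  set Y : EuclideanSpace ℝ (Fin n) := psiR b₁ + (2:ℝ)•psiR b₂ + (4:ℝ)•embZ zy with hY
  set ε : Fin n → ℝ := fun i => ((1 - 2*((a₁ i + b₁ i).val:ℤ) : ℤ):ℝ) with hε_def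
  have hε : ∀ i, ε i * ε i = 1 := by
    intro i
    have hv : (a₁ i + b₁ i).val < 2 := ZMod.val_lt _
    have h01 : (a₁ i + b₁ i).val = 0 ∨ (a₁ i + b₁ i).val = 1 := by omega
    simp only [hε_def]
    rcases h01 with h | h <;> rw [h] <;> norm_num
  refine ⟨signAffine ε hε (WithLp.toLp 2 (fun i => Y i - ε i * X i)), ?_, ?_⟩
  · ext i
    show ε i * X i + (Y i - ε i * X i) = Y i
    ring
  · apply Set.eq_of_subset_of_subset
    · rintro _ ⟨v, hv, rfl⟩
      exact constrC_image_mem C₁ C₂ ha₁ hb₁ ha₂ hb₂ zx zy hv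
    · intro w hw
      refine ⟨(signAffine ε hε (WithLp.toLp 2 (fun i => Y i - ε i * X i))).symm w, ?_,
        (signAffine ε hε (WithLp.toLp 2 (fun i => Y i - ε i * X i))).apply_symm_apply w⟩
      have hsymm : (signAffine ε hε (WithLp.toLp 2 (fun i => Y i - ε i * X i))).symm w
          = (WithLp.toLp 2 (fun i => ε i * w i + (X i - ε i * Y i)) : EuclideanSpace ℝ (Fin n)) := by
        ext i
        show ε i * (w i - (Y i - ε i * X i)) = ε i * w i + (X i - ε i * Y i)
        linear_combination (X i) * hε i
      rw [hsymm]
      have h := constrC_image_mem C₁ C₂ hb₁ ha₁ hb₂ ha₂ zy zx hw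
      have hcomm : ∀ i : Fin n, ((1 - 2*((b₁ i + a₁ i).val:ℤ) : ℤ):ℝ) = ε i := by
        intro i; simp only [hε_def]; rw [add_comm (b₁ i) (a₁ i)]
      simp only [hcomm, ← hX, ← hY] at h
      exact h
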